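/- Fix l > 0, β ∈ ℝ, N ∈ ℕ, and let Ω_N(x₁,…,x_N) = ∏_{1 ≤ j < k ≤ N} (sin(π(x_j − x_k)/l))^β on the open region 0 < x_N < ⋯ < x₁ < l. Then Ω_N is an eigenfunction of the Calogero–Moser–Sutherland Hamiltonian H_N = −Σ_j ∂²/∂x_j² + Σ_{j ≠ k} π²β(β−1) / (l² sin²(π(x_j − x_k)/l)), with eigenvalue E_N = (πβ/l)² · N(N² − 1)/3. -/

import Mathlib

open Real Finset


private lemma triple_conv {N : ℕ} (g : Fin N → Fin N → Fin N → ℝ) :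
    ∑ t ∈ Finset.univ.filter
      (fun t : Fin N × Fin N × Fin N => t.1 ≠ t.2.1 ∧ t.1 ≠ t.2.2 ∧ t.2.1 ≠ t.2.2),
      g t.1 t.2.1 t.2.2
    = ∑ j, ∑ k ∈ Finset.univ.erase j, ∑ m ∈ (Finset.univ.erase j).erase k, g j k m := by
  rw [Finset.sum_filter, Fintype.sum_prod_type]
  refine Finset.sum_congr rfl fun j _ => ?_
  rw [Fintype.sum_prod_type]
  rw [show (Finset.univ.erase j) = Finset.univ.filter (fun k => k ≠ j) from (Finset.filter_ne' _ _).symm]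
  rw [Finset.sum_filter]
  refine Finset.sum_congr rfl fun k _ => ?_
  by_cases hjk : j ≠ k
  · simp only [hjk, true_and, if_pos (Ne.symm hjk)]
    rw [show ((Finset.univ.filter (fun k => k ≠ j)).erase k)
        = (Finset.univ.filter (fun k => k ≠ j)).filter (fun m => m ≠ k) from (Finset.filter_ne' _ _).symm]
    rw [Finset.filter_filter, Finset.sum_filter]
    refine Finset.sum_congr rfl fun m _ => ?_
    by_cases h1 : j ≠ m <;> by_cases h2 : k ≠ m <;>
      simp_all [Ne.symm, eq_comm, and_comm]
  · push_neg at hjk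
    simp [hjk]

private lemma cross_sum {N : ℕ} (f : Fin N → Fin N → ℝ)
    (htriple : ∀ j k m : Fin N, j ≠ k → j ≠ m → k ≠ m →
      f j k * f j m + f k j * f k m + f m j * f m k = -1) :
    ∑ j, ∑ k ∈ Finset.univ.erase j, ∑ m ∈ (Finset.univ.erase j).erase k,
      f j k * f j m
    = -((N : ℝ) * ((N : ℝ) - 1) * ((N : ℝ) - 2) / 3) := by
  set T := Finset.univ.filter
      (fun t : Fin N × Fin N × Fin N => t.1 ≠ t.2.1 ∧ t.1 ≠ t.2.2 ∧ t.2.1 ≠ t.2.2) with hT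
  have hmem : ∀ t : Fin N × Fin N × Fin N, t ∈ T ↔ (t.1 ≠ t.2.1 ∧ t.1 ≠ t.2.2 ∧ t.2.1 ≠ t.2.2) := by
    intro t; simp [hT]
  have hC : ∑ j, ∑ k ∈ Finset.univ.erase j, ∑ m ∈ (Finset.univ.erase j).erase k,
      f j k * f j m = ∑ t ∈ T, f t.1 t.2.1 * f t.1 t.2.2 := (triple_conv _).symm
  -- rotation
  have hrot1 : ∑ t ∈ T, f t.1 t.2.1 * f t.1 t.2.2 = ∑ t ∈ T, f t.2.1 t.2.2 * f t.2.1 t.1 := by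
    refine Finset.sum_nbij' (fun t => (t.2.2, t.1, t.2.1)) (fun t => (t.2.1, t.2.2, t.1)) ?_ ?_ ?_ ?_ ?_
    · intro t ht; rw [hmem] at ht ⊢; dsimp only; exact ⟨ht.2.1.symm, ht.2.2.symm, ht.1⟩
    · intro t ht; rw [hmem] at ht ⊢; dsimp only; exact ⟨ht.2.2, ht.1.symm, ht.2.1.symm⟩
    · intro t _; rfl
    · intro t _; rfl
    · intro t _; rfl
  have hrot2 : ∑ t ∈ T, f t.1 t.2.1 * f t.1 t.2.2 = ∑ t ∈ T, f t.2.2 t.1 * f t.2.2 t.2.1 := by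
    refine Finset.sum_nbij' (fun t => (t.2.1, t.2.2, t.1)) (fun t => (t.2.2, t.1, t.2.1)) ?_ ?_ ?_ ?_ ?_
    · intro t ht; rw [hmem] at ht ⊢; dsimp only; exact ⟨ht.2.2, ht.1.symm, ht.2.1.symm⟩
    · intro t ht; rw [hmem] at ht ⊢; dsimp only; exact ⟨ht.2.1.symm, ht.2.2.symm, ht.1⟩
    · intro t _; rfl
    · intro t _; rfl
    · intro t _; rfl
  have hcard : ∑ t ∈ T, (1 : ℝ) = (N : ℝ) * ((N : ℝ) - 1) * ((N : ℝ) - 2) := by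
    have := triple_conv (N := N) (fun _ _ _ => (1 : ℝ))
    rw [← hT] at this
    rw [this]
    rcases N with _ | _ | n
    · simp
    · simp
    · have h1 : ∀ j : Fin (n+2), (Finset.univ.erase j).card = n + 1 := by
        intro j; rw [Finset.card_erase_of_mem (Finset.mem_univ j)]; simp
      have h2 : ∀ (j k : Fin (n+2)), k ∈ Finset.univ.erase j →
          ((Finset.univ.erase j).erase k).card = n := by
        intro j k hk; rw [Finset.card_erase_of_mem hk, h1]; omega
      calc ∑ j : Fin (n+2), ∑ k ∈ Finset.univ.erase j, ∑ m ∈ (Finset.univ.erase j).erase k, (1:ℝ)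
          = ∑ j : Fin (n+2), ∑ k ∈ Finset.univ.erase j, (n : ℝ) := by
            refine Finset.sum_congr rfl fun j _ => Finset.sum_congr rfl fun k hk => ?_
            rw [Finset.sum_const, h2 j k hk, nsmul_eq_mul, mul_one]
        _ = ∑ j : Fin (n+2), ((n:ℝ) + 1) * n := by
            refine Finset.sum_congr rfl fun j _ => ?_
            rw [Finset.sum_const, h1 j, nsmul_eq_mul]; push_cast; ring
        _ = ((n:ℝ)+2) * ((n:ℝ)+1) * (n:ℝ) := by
            rw [Finset.sum_const, Finset.card_univ, Fintype.card_fin, nsmul_eq_mul]; push_cast; ring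
        _ = _ := by push_cast; ring
  have key : (3 : ℝ) * ∑ t ∈ T, f t.1 t.2.1 * f t.1 t.2.2
      = -((N : ℝ) * ((N : ℝ) - 1) * ((N : ℝ) - 2)) := by
    have : (3 : ℝ) * ∑ t ∈ T, f t.1 t.2.1 * f t.1 t.2.2
        = ∑ t ∈ T, (f t.1 t.2.1 * f t.1 t.2.2 + f t.2.1 t.2.2 * f t.2.1 t.1
            + f t.2.2 t.1 * f t.2.2 t.2.1) := by
      rw [Finset.sum_add_distrib, Finset.sum_add_distrib, ← hrot1, ← hrot2]; ring
    rw [this]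
    have : ∀ t ∈ T, (f t.1 t.2.1 * f t.1 t.2.2 + f t.2.1 t.2.2 * f t.2.1 t.1
        + f t.2.2 t.1 * f t.2.2 t.2.1) = -(1:ℝ) := by
      intro t ht; rw [hmem] at ht
      have := htriple t.1 t.2.1 t.2.2 ht.1 ht.2.1 ht.2.2
      linarith [this, mul_comm (f t.2.1 t.2.2) (f t.2.1 t.1), mul_comm (f t.2.2 t.1) (f t.2.2 t.2.1)]
    rw [Finset.sum_congr rfl this]
    rw [Finset.sum_neg_distrib, hcard]
  rw [hC]; linarith

private lemma sum_sq_identity {N : ℕ} (f : Fin N → Fin N → ℝ)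
    (htriple : ∀ j k m : Fin N, j ≠ k → j ≠ m → k ≠ m →
      f j k * f j m + f k j * f k m + f m j * f m k = -1) :
    ∑ j, (∑ k ∈ Finset.univ.erase j, f j k)^2
    = ∑ j, ∑ k ∈ Finset.univ.erase j, (f j k)^2
      - (N : ℝ) * ((N : ℝ) - 1) * ((N : ℝ) - 2) / 3 := by
  have step1 : ∀ j : Fin N, (∑ k ∈ Finset.univ.erase j, f j k)^2
      = ∑ k ∈ Finset.univ.erase j, ((f j k)^2
        + ∑ m ∈ (Finset.univ.erase j).erase k, f j k * f j m) := by
    intro j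
    rw [sq, Finset.sum_mul_sum]
    refine Finset.sum_congr rfl fun k hk => ?_
    rw [← Finset.sum_erase_add _ (fun m => f j k * f j m) hk, sq]
    ring
  calc ∑ j, (∑ k ∈ Finset.univ.erase j, f j k)^2
      = ∑ j, ∑ k ∈ Finset.univ.erase j, (f j k)^2
        + ∑ j, ∑ k ∈ Finset.univ.erase j, ∑ m ∈ (Finset.univ.erase j).erase k, f j k * f j m := by
        rw [← Finset.sum_add_distrib]
        refine Finset.sum_congr rfl fun j _ => ?_
        rw [step1 j, Finset.sum_add_distrib]
    _ = _ := by rw [cross_sum f htriple]; ring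

private lemma cot_triple (A B : ℝ) (hA : Real.sin A ≠ 0) (hB : Real.sin B ≠ 0)
    (hAB : Real.sin (A + B) ≠ 0) :
    (Real.cos A / Real.sin A) * (Real.cos (A+B) / Real.sin (A+B))
    + (Real.cos (-A) / Real.sin (-A)) * (Real.cos B / Real.sin B)
    + (Real.cos (-(A+B)) / Real.sin (-(A+B))) * (Real.cos (-B) / Real.sin (-B)) = -1 := by
  simp only [Real.sin_neg, Real.cos_neg]
  field_simp
  rw [Real.sin_add, Real.cos_add]
  ring

private lemma pair_collapse {N : ℕ} (w : Fin N → Fin N → ℝ) (hw : ∀ a b, w b a = -w a b) (j : Fin N) :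
    ∑ p ∈ Finset.univ.filter (fun p : Fin N × Fin N => p.1 < p.2),
      w p.1 p.2 * ((if p.1 = j then (1:ℝ) else 0) - (if p.2 = j then 1 else 0))
    = ∑ k ∈ Finset.univ.erase j, w j k := by
  rw [Finset.sum_filter, Fintype.sum_prod_type]
  rw [show (Finset.univ.erase j) = Finset.univ.filter (fun k => k ≠ j) from
    (Finset.filter_ne' _ _).symm, Finset.sum_filter]
  have key : ∀ a b : Fin N,
      (if a < b then w a b * ((if a = j then (1:ℝ) else 0) - (if b = j then 1 else 0)) else 0)
      = (if a = j then (if j < b then w j b else 0) else 0)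
        + (if b = j then (if a < j then w j a else 0) else 0) := by
    intro a b
    rcases eq_or_ne a j with haj | haj
    · rcases eq_or_ne b j with hbj | hbj
      · simp [haj, hbj]
      · simp [haj, hbj]
    · rcases eq_or_ne b j with hbj | hbj
      · simp [hbj, haj, hw a j]
        try (split_ifs <;> ring)
      · simp [haj, hbj]
  calc ∑ a, ∑ b, (if a < b then w a b * ((if a = j then (1:ℝ) else 0) - (if b = j then 1 else 0)) else 0)
      = ∑ a, ∑ b, ((if a = j then (if j < b then w j b else 0) else 0)
        + (if b = j then (if a < j then w j a else 0) else 0)) := by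
        exact Finset.sum_congr rfl fun a _ => Finset.sum_congr rfl fun b _ => key a b
    _ = (∑ a, ∑ b, (if a = j then (if j < b then w j b else 0) else 0))
        + ∑ a, ∑ b, (if b = j then (if a < j then w j a else 0) else 0) := by
        rw [← Finset.sum_add_distrib]
        exact Finset.sum_congr rfl fun a _ => Finset.sum_add_distrib
    _ = (∑ b, if j < b then w j b else 0) + ∑ a, (if a < j then w j a else 0) := by
        congr 1
        · rw [Finset.sum_comm]
          refine Finset.sum_congr rfl fun b _ => ?_
          rw [Finset.sum_ite_eq' Finset.univ j (fun a => if j < b then w j b else 0)]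
          simp
        · refine Finset.sum_congr rfl fun a _ => ?_
          rw [Finset.sum_ite_eq' Finset.univ j (fun b => if a < j then w j a else 0)]
          simp
    _ = ∑ k, if k ≠ j then w j k else 0 := by
        rw [← Finset.sum_add_distrib]
        refine Finset.sum_congr rfl fun k _ => ?_
        rcases lt_trichotomy j k with h | h | h
        · simp [h, asymm h, h.ne', h.ne]
        · simp [h]
        · simp [h, asymm h, h.ne', h.ne]

private lemma pair_collapse_sq {N : ℕ} (w : Fin N → Fin N → ℝ) (hw : ∀ a b, w b a = w a b) (j : Fin N) :
    ∑ p ∈ Finset.univ.filter (fun p : Fin N × Fin N => p.1 < p.2),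
      w p.1 p.2 * ((if p.1 = j then (1:ℝ) else 0) - (if p.2 = j then 1 else 0))^2
    = ∑ k ∈ Finset.univ.erase j, w j k := by
  rw [Finset.sum_filter, Fintype.sum_prod_type]
  rw [show (Finset.univ.erase j) = Finset.univ.filter (fun k => k ≠ j) from
    (Finset.filter_ne' _ _).symm, Finset.sum_filter]
  have key : ∀ a b : Fin N,
      (if a < b then w a b * ((if a = j then (1:ℝ) else 0) - (if b = j then 1 else 0))^2 else 0)
      = (if a = j then (if j < b then w j b else 0) else 0)
        + (if b = j then (if a < j then w j a else 0) else 0) := by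
    intro a b
    rcases eq_or_ne a j with haj | haj
    · rcases eq_or_ne b j with hbj | hbj
      · simp [haj, hbj]
      · simp [haj, hbj]
    · rcases eq_or_ne b j with hbj | hbj
      · simp [hbj, haj, hw a j]
        try (split_ifs <;> ring)
      · simp [haj, hbj]
  calc ∑ a, ∑ b, (if a < b then w a b * ((if a = j then (1:ℝ) else 0) - (if b = j then 1 else 0))^2 else 0)
      = ∑ a, ∑ b, ((if a = j then (if j < b then w j b else 0) else 0)
        + (if b = j then (if a < j then w j a else 0) else 0)) := by
        exact Finset.sum_congr rfl fun a _ => Finset.sum_congr rfl fun b _ => key a b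
    _ = (∑ a, ∑ b, (if a = j then (if j < b then w j b else 0) else 0))
        + ∑ a, ∑ b, (if b = j then (if a < j then w j a else 0) else 0) := by
        rw [← Finset.sum_add_distrib]
        exact Finset.sum_congr rfl fun a _ => Finset.sum_add_distrib
    _ = (∑ b, if j < b then w j b else 0) + ∑ a, (if a < j then w j a else 0) := by
        congr 1
        · rw [Finset.sum_comm]
          refine Finset.sum_congr rfl fun b _ => ?_
          rw [Finset.sum_ite_eq' Finset.univ j (fun a => if j < b then w j b else 0)]
          simp
        · refine Finset.sum_congr rfl fun a _ => ?_
          rw [Finset.sum_ite_eq' Finset.univ j (fun b => if a < j then w j a else 0)]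
          simp
    _ = ∑ k, if k ≠ j then w j k else 0 := by
        rw [← Finset.sum_add_distrib]
        refine Finset.sum_congr rfl fun k _ => ?_
        rcases lt_trichotomy j k with h | h | h
        · simp [h, asymm h, h.ne', h.ne]
        · simp [h]
        · simp [h, asymm h, h.ne', h.ne]


theorem CMS_ground_state_eigenfunction
    (l β : ℝ) (hl : 0 < l) (N : ℕ)
    (Ω : (Fin N → ℝ) → ℝ)
    (hΩ : ∀ x, Ω x = ∏ p ∈ Finset.univ.filter (fun p : Fin N × Fin N => p.1 < p.2),
      Real.sin (Real.pi * (x p.1 - x p.2) / l) ^ β)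
    (x : Fin N → ℝ)
    (hx : (∀ j, 0 < x j ∧ x j < l) ∧ ∀ j k : Fin N, j < k → x k < x j) :
    -(∑ j : Fin N,
        fderiv ℝ (fun y => fderiv ℝ Ω y (Pi.single j 1)) x (Pi.single j 1)) +
      (∑ j : Fin N, ∑ k ∈ Finset.univ.erase j,
        Real.pi ^ 2 * β * (β - 1) /
          (l ^ 2 * Real.sin (Real.pi * (x j - x k) / l) ^ 2)) * Ω x =
      (Real.pi * β / l) ^ 2 * (N * ((N : ℝ) ^ 2 - 1) / 3) * Ω x := by
  obtain ⟨hx1, hx2⟩ := hx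
  have hπ := Real.pi_pos
  set c : ℝ := Real.pi / l with hc
  have hcpos : 0 < c := div_pos hπ hl
  set P : Finset (Fin N × Fin N) := Finset.univ.filter (fun p : Fin N × Fin N => p.1 < p.2)
    with hP
  set L : (Fin N × Fin N) → (Fin N → ℝ) →L[ℝ] ℝ :=
    fun p => c • ((ContinuousLinearMap.proj p.1 : (Fin N → ℝ) →L[ℝ] ℝ)
      - (ContinuousLinearMap.proj p.2 : (Fin N → ℝ) →L[ℝ] ℝ)) with hLdef
  have hL : ∀ (p : Fin N × Fin N) (y : Fin N → ℝ), L p y = c * (y p.1 - y p.2) := by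
    intro p y; simp [hLdef]
  have harg : ∀ a : ℝ, Real.pi * a / l = c * a := by intro a; rw [hc]; ring
  set F : (Fin N → ℝ) → ℝ := fun y => ∑ p ∈ P, Real.log (Real.sin (L p y)) with hF
  set G : (Fin N → ℝ) → ℝ := fun y => Real.exp (β * F y) with hG
  set U : Set (Fin N → ℝ) := {y | ∀ p ∈ P, 0 < Real.sin (L p y)} with hU
  have hmemP : ∀ p : Fin N × Fin N, p ∈ P ↔ p.1 < p.2 := by intro p; simp [hP]
  have hxU : x ∈ U := by
    intro p hp
    rw [hmemP] at hp
    have h1 := hx2 p.1 p.2 hp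
    have h2 := (hx1 p.1).2
    have h3 := (hx1 p.2).1
    rw [hL]
    apply Real.sin_pos_of_pos_of_lt_pi
    · exact mul_pos hcpos (by linarith)
    · have hlt : x p.1 - x p.2 < l := by linarith
      have := mul_lt_mul_of_pos_left hlt hcpos
      have hcl : c * l = Real.pi := by rw [hc]; field_simp
      linarith
  have hUopen : IsOpen U := by
    have : U = ⋂ p ∈ P, (fun y : Fin N → ℝ => Real.sin (L p y)) ⁻¹' Set.Ioi 0 := by
      ext y; simp [hU]
    rw [this]
    refine isOpen_biInter_finset fun p _ => ?_
    refine Continuous.isOpen_preimage ?_ _ isOpen_Ioi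
    exact Real.continuous_sin.comp (L p).continuous
  have hΩG : ∀ y ∈ U, Ω y = G y := by
    intro y hy
    rw [hΩ y]
    have hGy : G y = ∏ p ∈ P, Real.exp (β * Real.log (Real.sin (L p y))) := by
      simp only [hG, hF]
      rw [Finset.mul_sum, Real.exp_sum]
    rw [hGy]
    refine Finset.prod_congr rfl fun p hp => ?_
    have hs := hy p hp
    rw [show Real.pi * (y p.1 - y p.2) / l = L p y from by rw [hL, harg]]
    rw [Real.rpow_def_of_pos hs, mul_comm]
  set Φ : (Fin N → ℝ) → (Fin N → ℝ) →L[ℝ] ℝ :=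
    fun y => ∑ p ∈ P, ((Real.sin (L p y))⁻¹ * Real.cos (L p y)) • L p with hΦ
  have hsinne : ∀ y ∈ U, ∀ p ∈ P, Real.sin (L p y) ≠ 0 := fun y hy p hp => ne_of_gt (hy p hp)
  have hFder : ∀ y ∈ U, HasFDerivAt F (Φ y) y := by
    intro y hy
    apply HasFDerivAt.fun_sum
    intro p hp
    have h3 : HasFDerivAt (fun z => Real.sin (L p z)) (Real.cos (L p y) • L p) y :=
      (Real.hasDerivAt_sin (L p y)).comp_hasFDerivAt y (L p).hasFDerivAt
    have h5 := (Real.hasDerivAt_log (hsinne y hy p hp)).comp_hasFDerivAt y h3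
    simpa [Function.comp_def, smul_smul] using h5
  have hGder : ∀ y ∈ U, HasFDerivAt G ((β * G y) • Φ y) y := by
    intro y hy
    have h1 := (hFder y hy).const_mul β
    have h2 := (Real.hasDerivAt_exp (β * F y)).comp_hasFDerivAt y h1
    have : Real.exp (β * F y) • β • Φ y = (β * G y) • Φ y := by
      rw [smul_smul, hG, mul_comm]
    rw [← this]
    simpa [Function.comp_def] using h2
  have hΩfder : ∀ y ∈ U, fderiv ℝ Ω y = (β * G y) • Φ y := by
    intro y hy
    have hev : Ω =ᶠ[nhds y] G :=
      Filter.eventuallyEq_of_mem (hUopen.mem_nhds hy) (fun z hz => hΩG z hz)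
    rw [hev.fderiv_eq, (hGder y hy).fderiv]
  set dd : (Fin N × Fin N) → ℝ := fun p =>
    (-Real.cos (L p x) / Real.sin (L p x) ^ 2) * Real.cos (L p x)
      + (Real.sin (L p x))⁻¹ * (-Real.sin (L p x)) with hdd
  set Qf : (Fin N → ℝ) → (Fin N → ℝ) → ℝ :=
    fun v y => ∑ p ∈ P, ((Real.sin (L p y))⁻¹ * Real.cos (L p y)) * (L p v) with hQf
  have hΦapp : ∀ y v, Φ y v = Qf v y := by
    intro y v
    rw [hΦ, hQf]
    simp [ContinuousLinearMap.sum_apply, ContinuousLinearMap.smul_apply]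
  have hQder : ∀ v, HasFDerivAt (fun y => Qf v y) (∑ p ∈ P, (dd p * L p v) • L p) x := by
    intro v
    apply HasFDerivAt.fun_sum
    intro p hp
    have hs := hsinne x hxU p hp
    have h1 : HasDerivAt (fun t : ℝ => (Real.sin t)⁻¹ * Real.cos t) (dd p) (L p x) := by
      have := ((Real.hasDerivAt_sin (L p x)).inv hs).fun_mul (Real.hasDerivAt_cos (L p x))
      simpa [hdd] using this
    have h3 := (h1.comp_hasFDerivAt x (L p).hasFDerivAt).mul_const (L p v)
    simpa [smul_smul, mul_comm] using h3
  have hsecond : ∀ j : Fin N,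
      fderiv ℝ (fun y => fderiv ℝ Ω y (Pi.single j 1)) x (Pi.single j 1)
      = (β * G x) * (∑ p ∈ P, dd p * (L p (Pi.single j 1)) ^ 2)
        + Qf (Pi.single j 1) x * (β * ((β * G x) * Qf (Pi.single j 1) x)) := by
    intro j
    set v : Fin N → ℝ := Pi.single j 1 with hv
    have hev : (fun y => fderiv ℝ Ω y v) =ᶠ[nhds x] (fun y => (β * G y) * Qf v y) := by
      refine Filter.eventuallyEq_of_mem (hUopen.mem_nhds hxU) (fun y hy => ?_)
      rw [hΩfder y hy]
      simp only [ContinuousLinearMap.smul_apply, smul_eq_mul, hΦapp]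
    have hψ : HasFDerivAt (fun y => (β * G y) * Qf v y)
        ((β * G x) • (∑ p ∈ P, (dd p * L p v) • L p)
          + (Qf v x) • (β • ((β * G x) • Φ x))) x :=
      HasFDerivAt.mul ((hGder x hxU).const_mul β) (hQder v)
    rw [hev.fderiv_eq, hψ.fderiv]
    simp only [ContinuousLinearMap.add_apply, ContinuousLinearMap.smul_apply,
      ContinuousLinearMap.sum_apply, smul_eq_mul, hΦapp]
    simp only [pow_two, mul_assoc]
  -- trig setup
  set θ : Fin N → Fin N → ℝ := fun a b => c * (x a - x b) with hθ
  set ct : Fin N → Fin N → ℝ := fun a b => Real.cos (θ a b) / Real.sin (θ a b) with hct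
  have hθanti : ∀ a b, θ b a = -θ a b := by intro a b; simp only [hθ]; ring
  have hspos : ∀ a b : Fin N, a < b → 0 < Real.sin (θ a b) := by
    intro a b hab
    have h1 := hx2 a b hab
    have h2 := (hx1 a).2
    have h3 := (hx1 b).1
    simp only [hθ]
    apply Real.sin_pos_of_pos_of_lt_pi
    · exact mul_pos hcpos (by linarith)
    · have hlt : x a - x b < l := by linarith
      have := mul_lt_mul_of_pos_left hlt hcpos
      have hcl : c * l = Real.pi := by rw [hc]; field_simp
      linarith
  have hsne : ∀ a b : Fin N, a ≠ b → Real.sin (θ a b) ≠ 0 := by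
    intro a b hab
    rcases lt_or_gt_of_ne hab with h | h
    · exact ne_of_gt (hspos a b h)
    · rw [hθanti b a, Real.sin_neg]
      exact neg_ne_zero.mpr (ne_of_gt (hspos b a h))
  have hctanti : ∀ a b, ct b a = -ct a b := by
    intro a b
    simp only [hct]
    rw [hθanti a b, Real.sin_neg, Real.cos_neg, div_neg]
  have hQx : ∀ j : Fin N, Qf (Pi.single j 1) x = c * ∑ k ∈ Finset.univ.erase j, ct j k := by
    intro j
    calc Qf (Pi.single j 1) x
        = c * ∑ p ∈ P, ct p.1 p.2 *
            ((if p.1 = j then (1:ℝ) else 0) - (if p.2 = j then 1 else 0)) := by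
          simp only [hQf]
          rw [Finset.mul_sum]
          refine Finset.sum_congr rfl fun p hp => ?_
          rw [show L p (Pi.single j 1)
              = c * ((if p.1 = j then (1:ℝ) else 0) - (if p.2 = j then 1 else 0)) from by
            rw [hL]; simp [Pi.single_apply]]
          rw [show L p x = θ p.1 p.2 from by rw [hL, hθ]]
          simp only [hct]
          rw [inv_mul_eq_div]
          ring
      _ = c * ∑ k ∈ Finset.univ.erase j, ct j k := by
          congr 1
          rw [hP]
          exact pair_collapse ct hctanti j
  have hW : ∀ j : Fin N, ∑ p ∈ P, dd p * (L p (Pi.single j 1)) ^ 2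
      = c ^ 2 * ∑ k ∈ Finset.univ.erase j, (-(1 / Real.sin (θ j k) ^ 2)) := by
    intro j
    set w2 : Fin N → Fin N → ℝ := fun a b =>
      (-Real.cos (θ a b) / Real.sin (θ a b) ^ 2) * Real.cos (θ a b)
        + (Real.sin (θ a b))⁻¹ * (-Real.sin (θ a b)) with hw2
    have hw2sym : ∀ a b, w2 b a = w2 a b := by
      intro a b
      simp only [hw2]
      rw [hθanti a b]
      simp only [Real.sin_neg, Real.cos_neg]
      ring
    calc ∑ p ∈ P, dd p * (L p (Pi.single j 1)) ^ 2
        = c ^ 2 * ∑ p ∈ P, w2 p.1 p.2 *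
            ((if p.1 = j then (1:ℝ) else 0) - (if p.2 = j then 1 else 0)) ^ 2 := by
          rw [Finset.mul_sum]
          refine Finset.sum_congr rfl fun p hp => ?_
          rw [show L p (Pi.single j 1)
              = c * ((if p.1 = j then (1:ℝ) else 0) - (if p.2 = j then 1 else 0)) from by
            rw [hL]; simp [Pi.single_apply]]
          simp only [hdd, hw2]
          rw [show L p x = θ p.1 p.2 from by rw [hL, hθ]]
          ring
      _ = c ^ 2 * ∑ k ∈ Finset.univ.erase j, w2 j k := by
          congr 1
          rw [hP]
          exact pair_collapse_sq w2 hw2sym j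
      _ = c ^ 2 * ∑ k ∈ Finset.univ.erase j, (-(1 / Real.sin (θ j k) ^ 2)) := by
          congr 1
          refine Finset.sum_congr rfl fun k hk => ?_
          have hs := hsne j k (Ne.symm (Finset.mem_erase.mp hk).1)
          simp only [hw2]
          have hpz := Real.sin_sq_add_cos_sq (θ j k)
          field_simp
          linarith
  have hpot : ∀ j k : Fin N, k ∈ Finset.univ.erase j →
      Real.pi ^ 2 * β * (β - 1) / (l ^ 2 * Real.sin (Real.pi * (x j - x k) / l) ^ 2)
      = β * (β - 1) * c ^ 2 * (1 / Real.sin (θ j k) ^ 2) := by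
    intro j k hk
    have hs := hsne j k (Ne.symm (Finset.mem_erase.mp hk).1)
    rw [harg (x j - x k)]
    rw [show c * (x j - x k) = θ j k from by rw [hθ]]
    rw [show c ^ 2 = Real.pi ^ 2 / l ^ 2 from by rw [hc]; ring]
    field_simp
  have htriple : ∀ j k m : Fin N, j ≠ k → j ≠ m → k ≠ m →
      ct j k * ct j m + ct k j * ct k m + ct m j * ct m k = -1 := by
    intro j k m hjk hjm hkm
    have hAB : Real.sin (θ j k + θ k m) ≠ 0 := by
      rw [show θ j k + θ k m = θ j m from by simp only [hθ]; ring]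
      exact hsne j m hjm
    have hid := cot_triple (θ j k) (θ k m) (hsne j k hjk) (hsne k m hkm) hAB
    simp only [hct]
    rw [show θ j m = θ j k + θ k m from by simp only [hθ]; ring,
        show θ k j = -(θ j k) from by simp only [hθ]; ring,
        show θ m j = -(θ j k + θ k m) from by simp only [hθ]; ring,
        show θ m k = -(θ k m) from by simp only [hθ]; ring]
    exact hid
  have hsumsq : ∑ j, (∑ k ∈ Finset.univ.erase j, ct j k) ^ 2
      = (∑ j, ∑ k ∈ Finset.univ.erase j, (ct j k) ^ 2)
        - (N : ℝ) * ((N : ℝ) - 1) * ((N : ℝ) - 2) / 3 := sum_sq_identity ct htriple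
  have hcount : ∑ j : Fin N, ∑ k ∈ Finset.univ.erase j, (1 : ℝ) = (N : ℝ) * ((N : ℝ) - 1) := by
    rcases N with _ | n
    · simp
    · have h1 : ∀ j : Fin (n + 1), (Finset.univ.erase j).card = n := by
        intro j; rw [Finset.card_erase_of_mem (Finset.mem_univ j)]; simp
      calc ∑ j : Fin (n+1), ∑ k ∈ Finset.univ.erase j, (1:ℝ)
          = ∑ j : Fin (n+1), (n : ℝ) := by
            refine Finset.sum_congr rfl fun j _ => ?_
            rw [Finset.sum_const, h1 j, nsmul_eq_mul, mul_one]
        _ = (↑(n+1) : ℝ) * ((↑(n+1) : ℝ) - 1) := by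
            rw [Finset.sum_const, Finset.card_univ, Fintype.card_fin, nsmul_eq_mul]
            push_cast; ring
  have hUsum : ∑ j, ∑ k ∈ Finset.univ.erase j, (1 / Real.sin (θ j k) ^ 2)
      = (N : ℝ) * ((N : ℝ) - 1) + ∑ j, ∑ k ∈ Finset.univ.erase j, (ct j k) ^ 2 := by
    calc ∑ j, ∑ k ∈ Finset.univ.erase j, (1 / Real.sin (θ j k) ^ 2)
        = ∑ j, ∑ k ∈ Finset.univ.erase j, ((1:ℝ) + (ct j k) ^ 2) := by
          refine Finset.sum_congr rfl fun j _ => Finset.sum_congr rfl fun k hk => ?_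
          have hs := hsne j k (Ne.symm (Finset.mem_erase.mp hk).1)
          simp only [hct]
          field_simp
          exact (Real.sin_sq_add_cos_sq _).symm
      _ = (∑ j, ∑ k ∈ Finset.univ.erase j, (1:ℝ))
          + ∑ j, ∑ k ∈ Finset.univ.erase j, (ct j k) ^ 2 := by
          rw [← Finset.sum_add_distrib]
          exact Finset.sum_congr rfl fun j _ => Finset.sum_add_distrib
      _ = _ := by rw [hcount]
  -- final assembly
  rw [hΩG x hxU]
  rw [Finset.sum_congr rfl (fun j _ => hsecond j)]
  have hterm : ∀ j : Fin N,
      (β * G x) * (∑ p ∈ P, dd p * (L p (Pi.single j 1)) ^ 2)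
        + Qf (Pi.single j 1) x * (β * ((β * G x) * Qf (Pi.single j 1) x))
      = β * G x * c ^ 2 * (-(∑ k ∈ Finset.univ.erase j, 1 / Real.sin (θ j k) ^ 2))
        + β ^ 2 * G x * c ^ 2 * (∑ k ∈ Finset.univ.erase j, ct j k) ^ 2 := by
    intro j
    rw [hW j, hQx j, Finset.sum_neg_distrib]
    ring
  rw [Finset.sum_congr rfl (fun j _ => hterm j)]
  rw [Finset.sum_add_distrib, ← Finset.mul_sum, ← Finset.mul_sum, Finset.sum_neg_distrib]
  rw [show (∑ j : Fin N, ∑ k ∈ Finset.univ.erase j,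
        Real.pi ^ 2 * β * (β - 1) / (l ^ 2 * Real.sin (Real.pi * (x j - x k) / l) ^ 2))
      = β * (β - 1) * c ^ 2 * ∑ j : Fin N, ∑ k ∈ Finset.univ.erase j, (1 / Real.sin (θ j k) ^ 2) from by
    rw [Finset.mul_sum]
    refine Finset.sum_congr rfl fun j _ => ?_
    rw [Finset.mul_sum]
    exact Finset.sum_congr rfl fun k hk => hpot j k hk]
  rw [hUsum, hsumsq]
  rw [show (Real.pi * β / l) ^ 2 = β ^ 2 * c ^ 2 from by rw [hc]; ring]
  ring
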